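/- Assume the global d-set condition, let 0 < α < d, let g(r) := min( r^{α−d}, r^{−(d+α)} ) for r > 0, let p > d/α, and let f ∈ L^p(E; m). Then: (a) there is a constant C (depending only on C₂, d, α, p) such that sup_{x ∈ E} ∫_E g(|x − y|) |f(y)| m(dy) ≤ C ‖f‖_{L^p(E;m)}; (b) lim_{R→∞} sup_{x ∈ E} ∫_{E∖B(0,R)} g(|x − y|) |f(y)| m(dy) = 0; (c) for every ε > 0 there exists δ > 0 such that for every Borel set B ⊆ ℝⁿ with m(B) < δ, sup_{x ∈ E} ∫_B g(|x − y|) |f(y)| m(dy) < ε. -/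

import Mathlib

open MeasureTheory Set
open scoped ENNReal

lemma geom_ofReal_tsum {c t : ℝ} (hc : 0 ≤ c) (ht0 : 0 ≤ t) (ht1 : t < 1) :
    ∑' k : ℕ, ENNReal.ofReal (c * t ^ k) = ENNReal.ofReal (c * (1 - t)⁻¹) := by
  rw [← ENNReal.ofReal_tsum_of_nonneg (fun k => mul_nonneg hc (pow_nonneg ht0 k))
      ((summable_geometric_of_lt_one ht0 ht1).mul_left c)]
  rw [tsum_mul_left, tsum_geometric_of_lt_one ht0 ht1]

lemma annuli_bound {X : Type*} [MeasurableSpace X] [MetricSpace X] [OpensMeasurableSpace X]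
    (m : Measure X) (x : X) {C₂ d c : ℝ} (s : Set X) (L U : ℕ → ℝ)
    (hL : ∀ k, 0 < L k)
    (hup : ∀ r : ℝ, 0 < r → m (Metric.ball x r) ≤ ENNReal.ofReal (C₂ * r ^ d))
    (hU : ∀ k, 0 < U k)
    (hcov : s ⊆ ⋃ k, (Metric.ball x (U k) \ Metric.ball x (L k)))
    (hc : c ≤ 0) :
    ∫⁻ y in s, ENNReal.ofReal (dist x y ^ c) ∂m
      ≤ ∑' k, ENNReal.ofReal (L k ^ c * (C₂ * U k ^ d)) := by
  calc ∫⁻ y in s, ENNReal.ofReal (dist x y ^ c) ∂m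
      ≤ ∫⁻ y in ⋃ k, (Metric.ball x (U k) \ Metric.ball x (L k)),
          ENNReal.ofReal (dist x y ^ c) ∂m := lintegral_mono_set hcov
    _ ≤ ∑' k, ∫⁻ y in Metric.ball x (U k) \ Metric.ball x (L k),
          ENNReal.ofReal (dist x y ^ c) ∂m := lintegral_iUnion_le _ _
    _ ≤ ∑' k, ENNReal.ofReal (L k ^ c * (C₂ * U k ^ d)) := by
        refine ENNReal.tsum_le_tsum fun k => ?_
        have hmeas : MeasurableSet (Metric.ball x (U k) \ Metric.ball x (L k)) :=
          measurableSet_ball.diff measurableSet_ball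
        calc ∫⁻ y in Metric.ball x (U k) \ Metric.ball x (L k),
              ENNReal.ofReal (dist x y ^ c) ∂m
            ≤ ∫⁻ _ in Metric.ball x (U k) \ Metric.ball x (L k),
              ENNReal.ofReal (L k ^ c) ∂m := by
              refine setLIntegral_mono' hmeas fun y hy => ?_
              refine ENNReal.ofReal_le_ofReal ?_
              refine Real.rpow_le_rpow_of_nonpos (hL k) ?_ hc
              have : ¬ dist y x < L k := fun h => hy.2 (Metric.mem_ball.mpr h)
              rw [dist_comm]
              linarith [not_lt.mp this]
          _ = ENNReal.ofReal (L k ^ c) * m (Metric.ball x (U k) \ Metric.ball x (L k)) :=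
              setLIntegral_const _ _
          _ ≤ ENNReal.ofReal (L k ^ c) * ENNReal.ofReal (C₂ * U k ^ d) := by
              gcongr
              exact le_trans (measure_mono diff_subset) (hup _ (hU k))
          _ = ENNReal.ofReal (L k ^ c * (C₂ * U k ^ d)) :=
              (ENNReal.ofReal_mul (Real.rpow_nonneg (hL k).le _)).symm

lemma near_kernel_bound {X : Type*} [MeasurableSpace X] [MetricSpace X] [OpensMeasurableSpace X]
    (m : Measure X) (x : X) {C₂ d a : ℝ} (hC₂ : 0 ≤ C₂)
    (hup : ∀ r : ℝ, 0 < r → m (Metric.ball x r) ≤ ENNReal.ofReal (C₂ * r ^ d))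
    (ha : 0 < a) (had : a < d) :
    ∫⁻ y in Metric.ball x 1, ENNReal.ofReal (dist x y ^ (-a)) ∂m
      ≤ ENNReal.ofReal (C₂ * 2 ^ a * (1 - 2 ^ (a - d))⁻¹) := by
  classical
  set r : ℕ → ℝ := fun k => (2 : ℝ) ^ (-(k : ℝ)) with hr
  have hrpos : ∀ k, 0 < r k := fun k => Real.rpow_pos_of_pos two_pos _
  have hrk : ∀ k : ℕ, r k = (2 : ℝ)⁻¹ ^ k := by
    intro k
    simp only [hr]
    rw [Real.rpow_neg (by norm_num), Real.rpow_natCast, ← inv_pow]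
  set t : ℝ := (2 : ℝ) ^ (a - d) with ht
  have ht0 : 0 ≤ t := (Real.rpow_pos_of_pos two_pos _).le
  have ht1 : t < 1 := Real.rpow_lt_one_of_one_lt_of_neg one_lt_two (by linarith)
  have hcov : Metric.ball x 1 \ {x} ⊆
      ⋃ k, (Metric.ball x (r k) \ Metric.ball x (r (k + 1))) := by
    intro y hy
    have hxy : y ≠ x := hy.2
    have hd0 : 0 < dist y x := dist_pos.mpr hxy
    have hd1 : dist y x < 1 := by simpa [Metric.mem_ball] using hy.1
    have hex : ∃ k : ℕ, r k ≤ dist y x := by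
      obtain ⟨k, hk⟩ := exists_pow_lt_of_lt_one hd0 (by norm_num : (2 : ℝ)⁻¹ < 1)
      exact ⟨k, by rw [hrk]; exact hk.le⟩
    have hkne : Nat.find hex ≠ 0 := by
      intro h
      have h2 := Nat.find_spec hex
      rw [h, hrk 0, pow_zero] at h2
      linarith
    obtain ⟨j, hj⟩ := Nat.exists_eq_succ_of_ne_zero hkne
    refine mem_iUnion.mpr ⟨j, ?_, ?_⟩
    · have h3 := Nat.find_min hex (by omega : j < Nat.find hex)
      exact Metric.mem_ball.mpr (by push_neg at h3; exact h3)
    · intro hmem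
      have h1 := Nat.find_spec hex
      rw [hj] at h1
      exact absurd (Metric.mem_ball.mp hmem) (not_lt.mpr h1)
  have hterm : ∀ k : ℕ, r (k + 1) ^ (-a) * (C₂ * r k ^ d) = C₂ * 2 ^ a * t ^ k := by
    intro k
    have e1 : r (k + 1) ^ (-a) = (2 : ℝ) ^ (((k : ℝ) + 1) * a) := by
      simp only [hr]
      rw [← Real.rpow_mul (by norm_num : (0:ℝ) ≤ 2)]
      congr 1
      push_cast
      ring
    have e2 : r k ^ d = (2 : ℝ) ^ (-(k : ℝ) * d) := by
      simp only [hr]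
      rw [← Real.rpow_mul (by norm_num : (0:ℝ) ≤ 2)]
    calc r (k + 1) ^ (-a) * (C₂ * r k ^ d)
        = C₂ * ((2 : ℝ) ^ (((k : ℝ) + 1) * a) * (2 : ℝ) ^ (-(k : ℝ) * d)) := by
          rw [e1, e2]; ring
      _ = C₂ * (2 : ℝ) ^ (((k : ℝ) + 1) * a + -(k : ℝ) * d) := by
          rw [← Real.rpow_add two_pos]
      _ = C₂ * ((2 : ℝ) ^ a * (2 : ℝ) ^ ((a - d) * (k : ℝ))) := by
          rw [← Real.rpow_add two_pos]
          congr 1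
          ring
      _ = C₂ * 2 ^ a * t ^ k := by
          rw [ht, Real.rpow_mul (by norm_num : (0:ℝ) ≤ 2), Real.rpow_natCast]
          ring
  have hx0 : ∫⁻ y in ({x} : Set X), ENNReal.ofReal (dist x y ^ (-a)) ∂m = 0 := by
    rw [setLIntegral_congr_fun_ae (g := fun _ => 0) (measurableSet_singleton x)
      (ae_of_all _ fun y hy => by
        rw [mem_singleton_iff] at hy
        simp [hy, dist_self, Real.zero_rpow (neg_ne_zero.mpr ha.ne')])]
    exact lintegral_zero
  calc ∫⁻ y in Metric.ball x 1, ENNReal.ofReal (dist x y ^ (-a)) ∂m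
      ≤ ∫⁻ y in ({x} : Set X) ∪ (Metric.ball x 1 \ {x}),
          ENNReal.ofReal (dist x y ^ (-a)) ∂m := by
        refine lintegral_mono_set fun y hy => ?_
        by_cases h : y = x
        · exact Or.inl h
        · exact Or.inr ⟨hy, h⟩
    _ ≤ ∫⁻ y in ({x} : Set X), ENNReal.ofReal (dist x y ^ (-a)) ∂m
        + ∫⁻ y in Metric.ball x 1 \ {x}, ENNReal.ofReal (dist x y ^ (-a)) ∂m :=
        lintegral_union_le _ _ _
    _ = ∫⁻ y in Metric.ball x 1 \ {x}, ENNReal.ofReal (dist x y ^ (-a)) ∂m := by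
        rw [hx0, zero_add]
    _ ≤ ∑' k, ENNReal.ofReal ((r (k + 1)) ^ (-a) * (C₂ * r k ^ d)) :=
        annuli_bound m x _ (fun k => r (k + 1)) r (fun k => hrpos _) hup hrpos hcov
          (by linarith)
    _ = ∑' k : ℕ, ENNReal.ofReal (C₂ * 2 ^ a * t ^ k) := by
        congr 1
        funext k
        rw [hterm]
    _ = ENNReal.ofReal (C₂ * 2 ^ a * (1 - t)⁻¹) :=
        geom_ofReal_tsum (by positivity) ht0 ht1

lemma far_kernel_bound {X : Type*} [MeasurableSpace X] [MetricSpace X] [OpensMeasurableSpace X]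
    (m : Measure X) (x : X) {C₂ d b : ℝ} (hC₂ : 0 ≤ C₂)
    (hup : ∀ r : ℝ, 0 < r → m (Metric.ball x r) ≤ ENNReal.ofReal (C₂ * r ^ d))
    (hb : d < b) (hd : 0 < d) :
    ∫⁻ y in (Metric.ball x 1)ᶜ, ENNReal.ofReal (dist x y ^ (-b)) ∂m
      ≤ ENNReal.ofReal (C₂ * 2 ^ d * (1 - 2 ^ (d - b))⁻¹) := by
  classical
  set R : ℕ → ℝ := fun k => (2 : ℝ) ^ (k : ℝ) with hR
  have hRpos : ∀ k, 0 < R k := fun k => Real.rpow_pos_of_pos two_pos _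
  have hRk : ∀ k : ℕ, R k = (2 : ℝ) ^ k := by
    intro k
    simp only [hR]
    rw [Real.rpow_natCast]
  set t : ℝ := (2 : ℝ) ^ (d - b) with ht
  have ht0 : 0 ≤ t := (Real.rpow_pos_of_pos two_pos _).le
  have ht1 : t < 1 := Real.rpow_lt_one_of_one_lt_of_neg one_lt_two (by linarith)
  have hb0 : 0 < b := lt_trans hd hb
  have hcov : (Metric.ball x 1)ᶜ ⊆
      ⋃ k, (Metric.ball x (R (k + 1)) \ Metric.ball x (R k)) := by
    intro y hy
    have hd1 : (1 : ℝ) ≤ dist y x := by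
      have : ¬ dist y x < 1 := fun h => hy (Metric.mem_ball.mpr h)
      linarith [not_lt.mp this]
    have hex : ∃ k : ℕ, dist y x < R k := by
      obtain ⟨nn, hnn⟩ := exists_nat_gt (dist y x)
      refine ⟨nn, ?_⟩
      rw [hRk]
      calc dist y x < (nn : ℝ) := hnn
        _ ≤ (2 : ℝ) ^ nn := by exact_mod_cast (Nat.lt_two_pow_self (n := nn)).le
    have hkne : Nat.find hex ≠ 0 := by
      intro h
      have h2 := Nat.find_spec hex
      rw [h, hRk 0, pow_zero] at h2
      linarith
    obtain ⟨j, hj⟩ := Nat.exists_eq_succ_of_ne_zero hkne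
    refine mem_iUnion.mpr ⟨j, ?_, ?_⟩
    · have h1 := Nat.find_spec hex
      rw [hj] at h1
      exact Metric.mem_ball.mpr h1
    · intro hmem
      have h3 := Nat.find_min hex (by omega : j < Nat.find hex)
      exact h3 (Metric.mem_ball.mp hmem)
  have hterm : ∀ k : ℕ, R k ^ (-b) * (C₂ * R (k + 1) ^ d) = C₂ * 2 ^ d * t ^ k := by
    intro k
    have e1 : R k ^ (-b) = (2 : ℝ) ^ ((k : ℝ) * (-b)) := by
      simp only [hR]
      rw [← Real.rpow_mul (by norm_num : (0:ℝ) ≤ 2)]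
    have e2 : R (k + 1) ^ d = (2 : ℝ) ^ (((k : ℝ) + 1) * d) := by
      simp only [hR]
      rw [← Real.rpow_mul (by norm_num : (0:ℝ) ≤ 2)]
      congr 1
      push_cast
      ring
    calc R k ^ (-b) * (C₂ * R (k + 1) ^ d)
        = C₂ * ((2 : ℝ) ^ ((k : ℝ) * (-b)) * (2 : ℝ) ^ (((k : ℝ) + 1) * d)) := by
          rw [e1, e2]; ring
      _ = C₂ * (2 : ℝ) ^ ((k : ℝ) * (-b) + ((k : ℝ) + 1) * d) := by
          rw [← Real.rpow_add two_pos]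
      _ = C₂ * ((2 : ℝ) ^ d * (2 : ℝ) ^ ((d - b) * (k : ℝ))) := by
          rw [← Real.rpow_add two_pos]
          congr 1
          ring
      _ = C₂ * 2 ^ d * t ^ k := by
          rw [ht, Real.rpow_mul (by norm_num : (0:ℝ) ≤ 2), Real.rpow_natCast]
          ring
  calc ∫⁻ y in (Metric.ball x 1)ᶜ, ENNReal.ofReal (dist x y ^ (-b)) ∂m
      ≤ ∑' k, ENNReal.ofReal (R k ^ (-b) * (C₂ * R (k + 1) ^ d)) :=
        annuli_bound m x _ R (fun k => R (k + 1)) hRpos hup (fun k => hRpos _) hcov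
          (by linarith)
    _ = ∑' k : ℕ, ENNReal.ofReal (C₂ * 2 ^ d * t ^ k) := by
        congr 1
        funext k
        rw [hterm]
    _ = ENNReal.ofReal (C₂ * 2 ^ d * (1 - t)⁻¹) :=
        geom_ofReal_tsum (by positivity) ht0 ht1

set_option maxHeartbeats 1600000 in
/-- On a global `d`-set `E ⊆ ℝⁿ`, for `0 < α < d`, `g(r) = min(r^{α-d}, r^{-(d+α)})`,
`p > d/α` and `f ∈ L^p(E;m)`:
(a) `sup_{x∈E} ∫_E g(|x-y|)|f(y)| m(dy) ≤ C ‖f‖_{L^p(E;m)}`;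
(b) `lim_{R→∞} sup_{x∈E} ∫_{E∖B(0,R)} g(|x-y|)|f(y)| m(dy) = 0`;
(c) uniform absolute continuity over Borel sets `B` with small `m`-measure. -/
theorem stmt_18 (n : ℕ) (hn : 1 ≤ n) (d : ℝ) (hd0 : 0 < d) (hdn : d ≤ n)
    (E : Set (EuclideanSpace ℝ (Fin n))) (hE : MeasurableSet E) (hEne : E.Nonempty)
    (m : Measure (EuclideanSpace ℝ (Fin n))) (hmE : m Eᶜ = 0)
    (C₁ C₂ : ℝ) (hC₁ : 0 < C₁) (hC₁₂ : C₁ ≤ C₂)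
    (hlow : ∀ x ∈ E, ∀ r : ℝ, 0 < r → ENNReal.ofReal (C₁ * r ^ d) ≤ m (Metric.ball x r))
    (hup : ∀ x ∈ E, ∀ r : ℝ, 0 < r → m (Metric.ball x r) ≤ ENNReal.ofReal (C₂ * r ^ d))
    (α p : ℝ) (hα0 : 0 < α) (hαd : α < d) (hp : d / α < p)
    (f : EuclideanSpace ℝ (Fin n) → ℝ)
    (hf : MemLp f (ENNReal.ofReal p) (m.restrict E)) :
    (∃ C : ℝ, 0 < C ∧ ∀ x ∈ E,
        (∫⁻ y in E, ENNReal.ofReal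
            (min (dist x y ^ (α - d)) (dist x y ^ (-(d + α))) * |f y|) ∂m)
          ≤ ENNReal.ofReal C * eLpNorm f (ENNReal.ofReal p) (m.restrict E)) ∧
    (∀ ε : ℝ, 0 < ε → ∃ R₀ : ℝ, 0 < R₀ ∧ ∀ R : ℝ, R₀ ≤ R → ∀ x ∈ E,
        (∫⁻ y in E \ Metric.ball (0 : EuclideanSpace ℝ (Fin n)) R, ENNReal.ofReal
            (min (dist x y ^ (α - d)) (dist x y ^ (-(d + α))) * |f y|) ∂m)
          < ENNReal.ofReal ε) ∧
    (∀ ε : ℝ, 0 < ε → ∃ δ : ℝ, 0 < δ ∧ ∀ B : Set (EuclideanSpace ℝ (Fin n)),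
        MeasurableSet B → m B < ENNReal.ofReal δ → ∀ x ∈ E,
        (∫⁻ y in B, ENNReal.ofReal
            (min (dist x y ^ (α - d)) (dist x y ^ (-(d + α))) * |f y|) ∂m)
          < ENNReal.ofReal ε) := by
  classical
  have hC₂0 : (0:ℝ) ≤ C₂ := le_trans hC₁.le hC₁₂
  have hmem : ∀ᵐ y ∂m, y ∈ E := by
    rw [MeasureTheory.ae_iff]
    exact hmE
  have hres : m.restrict E = m := Measure.restrict_eq_self_of_ae_mem hmem
  have hda : (1:ℝ) < d / α := (one_lt_div hα0).mpr hαd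
  have hp1 : 1 < p := lt_trans hda hp
  have hppos : 0 < p := lt_trans one_pos hp1
  set q : ℝ := p / (p - 1) with hqdef
  have hpq : p.HolderConjugate q := (Real.holderConjugate_iff_eq_conjExponent hp1).mpr rfl
  have hq1 : 1 < q := hpq.symm.lt
  have hq0 : 0 < q := lt_trans one_pos hq1
  have hαp : d < α * p := by
    rw [div_lt_iff₀ hα0] at hp
    linarith
  set a : ℝ := (d - α) * q with hadef
  set b : ℝ := (d + α) * q with hbdef
  have ha0 : 0 < a := mul_pos (by linarith) hq0
  have hqp : (p - 1) * q = p := hpq.sub_one_mul_conj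
  have had : a < d := by
    have hp1' : 0 < p - 1 := by linarith
    have h1 : a * (p - 1) = (d - α) * ((p - 1) * q) := by rw [hadef]; ring
    rw [hqp] at h1
    nlinarith
  have hbd : d < b := by nlinarith
  -- kernel L^q bound
  have h2ad : (2:ℝ) ^ (a - d) < 1 := Real.rpow_lt_one_of_one_lt_of_neg one_lt_two (by linarith)
  have h2db : (2:ℝ) ^ (d - b) < 1 := Real.rpow_lt_one_of_one_lt_of_neg one_lt_two (by linarith)
  set K₁ : ℝ := C₂ * 2 ^ a * (1 - 2 ^ (a - d))⁻¹ with hK₁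
  set K₂ : ℝ := C₂ * 2 ^ d * (1 - 2 ^ (d - b))⁻¹ with hK₂
  have hK₁0 : 0 ≤ K₁ :=
    mul_nonneg (mul_nonneg hC₂0 (Real.rpow_pos_of_pos two_pos a).le)
      (inv_nonneg.mpr (by linarith))
  have hK₂0 : 0 ≤ K₂ :=
    mul_nonneg (mul_nonneg hC₂0 (Real.rpow_pos_of_pos two_pos d).le)
      (inv_nonneg.mpr (by linarith))
  set K : ℝ := K₁ + K₂ + 1 with hK
  have hKpos : 0 < K := by linarith
  have hker : ∀ x ∈ E, ∫⁻ y,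
      (ENNReal.ofReal (min (dist x y ^ (α - d)) (dist x y ^ (-(d + α))))) ^ q ∂m
        ≤ ENNReal.ofReal K := by
    intro x hx
    have hup' : ∀ r : ℝ, 0 < r → m (Metric.ball x r) ≤ ENNReal.ofReal (C₂ * r ^ d) :=
      fun r hr => hup x hx r hr
    have hmono1 : ∀ y, (ENNReal.ofReal (min (dist x y ^ (α - d)) (dist x y ^ (-(d + α))))) ^ q
        ≤ ENNReal.ofReal (dist x y ^ (-a)) := by
      intro y
      calc (ENNReal.ofReal (min (dist x y ^ (α - d)) (dist x y ^ (-(d + α))))) ^ q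
          ≤ (ENNReal.ofReal (dist x y ^ (α - d))) ^ q :=
            ENNReal.rpow_le_rpow (ENNReal.ofReal_le_ofReal (min_le_left _ _)) hq0.le
        _ = ENNReal.ofReal ((dist x y ^ (α - d)) ^ q) :=
            ENNReal.ofReal_rpow_of_nonneg (Real.rpow_nonneg dist_nonneg _) hq0.le
        _ = ENNReal.ofReal (dist x y ^ (-a)) := by
            rw [← Real.rpow_mul dist_nonneg]
            congr 1
            rw [hadef]
            ring
    have hmono2 : ∀ y, (ENNReal.ofReal (min (dist x y ^ (α - d)) (dist x y ^ (-(d + α))))) ^ q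
        ≤ ENNReal.ofReal (dist x y ^ (-b)) := by
      intro y
      calc (ENNReal.ofReal (min (dist x y ^ (α - d)) (dist x y ^ (-(d + α))))) ^ q
          ≤ (ENNReal.ofReal (dist x y ^ (-(d + α)))) ^ q :=
            ENNReal.rpow_le_rpow (ENNReal.ofReal_le_ofReal (min_le_right _ _)) hq0.le
        _ = ENNReal.ofReal ((dist x y ^ (-(d + α))) ^ q) :=
            ENNReal.ofReal_rpow_of_nonneg (Real.rpow_nonneg dist_nonneg _) hq0.le
        _ = ENNReal.ofReal (dist x y ^ (-b)) := by
            rw [← Real.rpow_mul dist_nonneg]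
            congr 1
            rw [hbdef]
            ring
    rw [← lintegral_add_compl
      (fun y => (ENNReal.ofReal (min (dist x y ^ (α - d)) (dist x y ^ (-(d + α))))) ^ q)
      (measurableSet_ball (x := x) (ε := 1))]
    calc (∫⁻ y in Metric.ball x 1,
            (ENNReal.ofReal (min (dist x y ^ (α - d)) (dist x y ^ (-(d + α))))) ^ q ∂m)
          + (∫⁻ y in (Metric.ball x 1)ᶜ,
            (ENNReal.ofReal (min (dist x y ^ (α - d)) (dist x y ^ (-(d + α))))) ^ q ∂m)
        ≤ (∫⁻ y in Metric.ball x 1, ENNReal.ofReal (dist x y ^ (-a)) ∂m)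
          + (∫⁻ y in (Metric.ball x 1)ᶜ, ENNReal.ofReal (dist x y ^ (-b)) ∂m) :=
          add_le_add (lintegral_mono fun y => hmono1 y) (lintegral_mono fun y => hmono2 y)
      _ ≤ ENNReal.ofReal K₁ + ENNReal.ofReal K₂ :=
          add_le_add (near_kernel_bound m x hC₂0 hup' ha0 had)
            (far_kernel_bound m x hC₂0 hup' hbd hd0)
      _ ≤ ENNReal.ofReal K := by
          rw [← ENNReal.ofReal_add hK₁0 hK₂0]
          exact ENNReal.ofReal_le_ofReal (by rw [hK]; linarith)
  -- facts about f
  set F : EuclideanSpace ℝ (Fin n) → ℝ≥0∞ := fun y => ENNReal.ofReal |f y| with hF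
  have hfm : AEStronglyMeasurable f m := by
    have h := hf.aestronglyMeasurable
    rwa [hres] at h
  have hFm : AEMeasurable F m := by
    have h2 : AEMeasurable (fun y => |f y|) m := by
      simpa [Real.norm_eq_abs] using hfm.norm.aemeasurable
    exact ENNReal.measurable_ofReal.comp_aemeasurable h2
  have hpne0 : (ENNReal.ofReal p) ≠ 0 := (ENNReal.ofReal_pos.mpr hppos).ne'
  have hptoReal : (ENNReal.ofReal p).toReal = p := ENNReal.toReal_ofReal hppos.le
  have hN_eq : eLpNorm f (ENNReal.ofReal p) (m.restrict E)
      = (∫⁻ y, F y ^ p ∂m) ^ (1 / p) := by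
    rw [hres, eLpNorm_eq_lintegral_rpow_enorm_toReal hpne0 ENNReal.ofReal_ne_top, hptoReal]
    congr 1
    refine lintegral_congr fun y => ?_
    rw [Real.enorm_eq_ofReal_abs]
  have hNfin : ∫⁻ y, F y ^ p ∂m < ∞ := by
    have h2 := hf.2
    rw [hN_eq] at h2
    exact (ENNReal.rpow_lt_top_iff_of_pos (by positivity : (0:ℝ) < 1/p)).mp h2
  have hg0 : ∀ (x y : EuclideanSpace ℝ (Fin n)),
      0 ≤ min (dist x y ^ (α - d)) (dist x y ^ (-(d + α))) := fun x y =>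
    le_min (Real.rpow_nonneg dist_nonneg _) (Real.rpow_nonneg dist_nonneg _)
  -- master Hölder estimate
  have master : ∀ x ∈ E, ∀ s : Set (EuclideanSpace ℝ (Fin n)),
      ∫⁻ y in s, ENNReal.ofReal
          (min (dist x y ^ (α - d)) (dist x y ^ (-(d + α))) * |f y|) ∂m
        ≤ ENNReal.ofReal K ^ (1/q) * (∫⁻ y in s, F y ^ p ∂m) ^ (1/p) := by
    intro x hx s
    set G : EuclideanSpace ℝ (Fin n) → ℝ≥0∞ :=
      fun y => ENNReal.ofReal (min (dist x y ^ (α - d)) (dist x y ^ (-(d + α)))) with hG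
    have hGmeas : Measurable G := by
      apply Measurable.ennreal_ofReal
      exact ((measurable_const.dist measurable_id).pow measurable_const).min
        ((measurable_const.dist measurable_id).pow measurable_const)
    have hH := ENNReal.lintegral_mul_le_Lp_mul_Lq (m.restrict s) hpq.symm
      hGmeas.aemeasurable (hFm.restrict)
    simp only [Pi.mul_apply] at hH
    calc ∫⁻ y in s, ENNReal.ofReal
            (min (dist x y ^ (α - d)) (dist x y ^ (-(d + α))) * |f y|) ∂m
        = ∫⁻ y in s, G y * F y ∂m := by
          refine lintegral_congr fun y => ?_
          rw [hG, hF, ENNReal.ofReal_mul (hg0 x y)]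
      _ ≤ (∫⁻ y in s, G y ^ q ∂m) ^ (1/q) * (∫⁻ y in s, F y ^ p ∂m) ^ (1/p) := hH
      _ ≤ ENNReal.ofReal K ^ (1/q) * (∫⁻ y in s, F y ^ p ∂m) ^ (1/p) := by
          refine mul_le_mul' (ENNReal.rpow_le_rpow ?_ (by positivity)) le_rfl
          exact le_trans (setLIntegral_le_lintegral _ _) (hker x hx)
  -- the common "small tail" estimate
  have hsmall : ∀ ε : ℝ, 0 < ε → ∀ x ∈ E, ∀ s : Set (EuclideanSpace ℝ (Fin n)),
      (∫⁻ y in s, F y ^ p ∂m) ≤ ENNReal.ofReal ((ε / (2 * (K ^ (1/q) + 1))) ^ p) →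
      ∫⁻ y in s, ENNReal.ofReal
          (min (dist x y ^ (α - d)) (dist x y ^ (-(d + α))) * |f y|) ∂m
        < ENNReal.ofReal ε := by
    intro ε hε x hx s hs
    set c : ℝ := ε / (2 * (K ^ (1/q) + 1)) with hc
    have hκ : (0:ℝ) ≤ K ^ (1/q) := by positivity
    have hc0 : 0 < c := by positivity
    calc ∫⁻ y in s, ENNReal.ofReal
            (min (dist x y ^ (α - d)) (dist x y ^ (-(d + α))) * |f y|) ∂m
        ≤ ENNReal.ofReal K ^ (1/q) * (∫⁻ y in s, F y ^ p ∂m) ^ (1/p) := master x hx s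
      _ ≤ ENNReal.ofReal K ^ (1/q) * (ENNReal.ofReal (c ^ p)) ^ (1/p) := by
          exact mul_le_mul' le_rfl (ENNReal.rpow_le_rpow hs (by positivity))
      _ = ENNReal.ofReal (K ^ (1/q)) * ENNReal.ofReal c := by
          rw [ENNReal.ofReal_rpow_of_nonneg hKpos.le (by positivity),
            ENNReal.ofReal_rpow_of_nonneg (by positivity) (by positivity)]
          congr 1
          rw [← Real.rpow_mul hc0.le, mul_one_div_cancel hppos.ne', Real.rpow_one]
      _ = ENNReal.ofReal (K ^ (1/q) * c) := (ENNReal.ofReal_mul hκ).symm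
      _ ≤ ENNReal.ofReal (ε / 2) := by
          refine ENNReal.ofReal_le_ofReal ?_
          rw [hc]
          rw [mul_comm, div_mul_eq_mul_div, div_le_div_iff₀ (by positivity) two_pos]
          nlinarith
      _ < ENNReal.ofReal ε := by
          rw [ENNReal.ofReal_lt_ofReal_iff hε]
          linarith
  refine ⟨⟨K ^ (1/q), by positivity, fun x hx => ?_⟩, ?_, ?_⟩
  · -- part (a)
    rw [hN_eq]
    calc ∫⁻ y in E, ENNReal.ofReal
            (min (dist x y ^ (α - d)) (dist x y ^ (-(d + α))) * |f y|) ∂m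
        ≤ ENNReal.ofReal K ^ (1/q) * (∫⁻ y in E, F y ^ p ∂m) ^ (1/p) := master x hx E
      _ ≤ ENNReal.ofReal K ^ (1/q) * (∫⁻ y, F y ^ p ∂m) ^ (1/p) :=
          mul_le_mul' le_rfl (ENNReal.rpow_le_rpow (setLIntegral_le_lintegral _ _)
            (by positivity))
      _ = ENNReal.ofReal (K ^ (1/q)) * (∫⁻ y, F y ^ p ∂m) ^ (1/p) := by
          rw [ENNReal.ofReal_rpow_of_nonneg hKpos.le (by positivity)]
  · -- part (b)
    intro ε hε
    set η : ℝ≥0∞ := ENNReal.ofReal ((ε / (2 * (K ^ (1/q) + 1))) ^ p) with hη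
    have hη0 : 0 < η := ENNReal.ofReal_pos.mpr (by positivity)
    set s : ℕ → Set (EuclideanSpace ℝ (Fin n)) :=
      fun k => E \ Metric.ball (0 : EuclideanSpace ℝ (Fin n)) (k : ℝ) with hsdef
    set ν : Measure (EuclideanSpace ℝ (Fin n)) := m.withDensity (fun y => F y ^ p) with hν
    have hν_apply : ∀ u : Set (EuclideanSpace ℝ (Fin n)), MeasurableSet u →
        ν u = ∫⁻ y in u, F y ^ p ∂m := fun u hu => withDensity_apply _ hu
    have hsets : ∀ k : ℕ, MeasurableSet (s k) := fun k => hE.diff measurableSet_ball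
    have hanti : Antitone s := by
      intro i j hij
      exact diff_subset_diff_right (Metric.ball_subset_ball (by exact_mod_cast hij))
    have hfin : ν (s 0) ≠ ∞ := by
      rw [hν_apply _ (hsets 0)]
      exact (lt_of_le_of_lt (setLIntegral_le_lintegral _ _) hNfin).ne
    have hiInter : ⋂ k : ℕ, s k = ∅ := by
      ext z
      simp only [hsdef, mem_iInter, mem_diff, mem_empty_iff_false, iff_false, not_forall]
      obtain ⟨k, hk⟩ := exists_nat_gt (dist z (0 : EuclideanSpace ℝ (Fin n)))
      exact ⟨k, fun h => h.2 (Metric.mem_ball.mpr hk)⟩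
    have htend := tendsto_measure_iInter_atTop (fun k => (hsets k).nullMeasurableSet)
      hanti ⟨0, hfin⟩
    rw [hiInter, measure_empty] at htend
    have hev := htend.eventually (gt_mem_nhds hη0)
    obtain ⟨k₀, hk₀⟩ := Filter.eventually_atTop.mp hev
    have hk₀' : ν (s k₀) < η := hk₀ k₀ le_rfl
    refine ⟨(k₀ : ℝ) + 1, by positivity, fun R hR x hx => ?_⟩
    apply hsmall ε hε x hx
    calc ∫⁻ y in E \ Metric.ball (0 : EuclideanSpace ℝ (Fin n)) R, F y ^ p ∂m
        ≤ ∫⁻ y in s k₀, F y ^ p ∂m := by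
          refine lintegral_mono_set ?_
          exact diff_subset_diff_right (Metric.ball_subset_ball (by linarith))
      _ = ν (s k₀) := (hν_apply _ (hsets k₀)).symm
      _ ≤ η := hk₀'.le
  · -- part (c)
    intro ε hε
    set η : ℝ≥0∞ := ENNReal.ofReal ((ε / (2 * (K ^ (1/q) + 1))) ^ p) with hη
    have hη0 : η ≠ 0 := (ENNReal.ofReal_pos.mpr (by positivity)).ne'
    obtain ⟨δ', hδ'0, hδ'⟩ := exists_pos_setLIntegral_lt_of_measure_lt hNfin.ne hη0
    refine ⟨(min δ' 1).toReal, ?_, fun B hB hmB x hx => ?_⟩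
    · refine ENNReal.toReal_pos ?_ ?_
      · exact (lt_min hδ'0 one_pos).ne'
      · exact ((min_le_right _ _).trans_lt ENNReal.one_lt_top).ne
    · apply hsmall ε hε x hx B
      refine le_of_lt (hδ' B ?_)
      have : ENNReal.ofReal ((min δ' 1).toReal) = min δ' 1 :=
        ENNReal.ofReal_toReal ((min_le_right _ _).trans_lt ENNReal.one_lt_top).ne
      rw [this] at hmB
      exact lt_of_lt_of_le hmB (min_le_left _ _)
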